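/- Suppose for some τ, L > 0 a random variable Z satisfies P(|Z| > (τ/L)·h₂⁻¹(L²t/2)) ≤ 2·e^{−t} for all t > 0. Then ‖Z‖_{Ψ₂(·;√3·L)} ≤ √3·τ. -/

import Mathlib

open MeasureTheory Set

noncomputable def h₂ (x : ℝ) : ℝ := (1 + x) * Real.log (1 + x) - x

lemma h2_hasDerivAt {x : ℝ} (hx : 0 < 1 + x) :
    HasDerivAt h₂ (Real.log (1 + x)) x := by
  have h1 : HasDerivAt (fun y : ℝ => 1 + y) 1 x := (hasDerivAt_id x).const_add 1
  have hlog : HasDerivAt (fun y : ℝ => Real.log (1 + y)) ((1 + x)⁻¹ * 1) x :=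
    (Real.hasDerivAt_log hx.ne').comp x h1
  have := (h1.mul hlog).sub (hasDerivAt_id x)
  convert this using 1
  · rfl
  · rfl
  · funext y; rfl
  · field_simp
    ring

lemma h2_strictMonoOn : StrictMonoOn h₂ (Set.Ici (0:ℝ)) := by
  apply strictMonoOn_of_deriv_pos (convex_Ici 0)
  · intro x hx
    exact ((h2_hasDerivAt (by simp at hx; linarith)).continuousAt).continuousWithinAt
  · intro x hx
    rw [interior_Ici] at hx
    rw [(h2_hasDerivAt (by linarith [hx.out])).deriv]
    exact Real.log_pos (by linarith [hx.out])

lemma h2_zero : h₂ 0 = 0 := by simp [h₂]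

lemma h2_nonneg {x : ℝ} (hx : 0 ≤ x) : 0 ≤ h₂ x := by
  rcases hx.eq_or_lt with h | h
  · rw [← h, h2_zero]
  · have := h2_strictMonoOn (le_refl (0:ℝ)) hx h
    rw [h2_zero] at this; exact this.le

lemma h2_measurable : Measurable h₂ :=
  ((measurable_const.add measurable_id).mul
    (Real.measurable_log.comp (measurable_const.add measurable_id))).sub measurable_id

lemma tail_integral :
    ∫⁻ s in Set.Ioi (0:ℝ), ENNReal.ofReal (2 * ((1+s)^3)⁻¹) = 1 := by
  have hderiv : ∀ s ∈ Set.Ici (0:ℝ),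
      HasDerivAt (fun s : ℝ => -((1+s)^2)⁻¹) (2 * ((1+s)^3)⁻¹) s := by
    intro s hs
    have hpos : (0:ℝ) < 1 + s := by simp at hs; linarith
    have h1 : HasDerivAt (fun y : ℝ => 1 + y) 1 s := (hasDerivAt_id s).const_add 1
    have h2p : HasDerivAt (fun y : ℝ => (1+y)^2) (2*(1+s)^1*1) s := h1.pow 2
    have hinvd := (h2p.inv (by positivity)).neg
    convert hinvd using 1
    · rfl
    · rfl
    · funext y; rfl
    field_simp
  have hnn : ∀ s ∈ Set.Ioi (0:ℝ), 0 ≤ 2 * ((1+s)^3)⁻¹ := by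
    intro s hs; have : (0:ℝ) < 1 + s := by simp at hs; linarith
    positivity
  have htend : Filter.Tendsto (fun s : ℝ => -((1+s)^2)⁻¹) Filter.atTop (nhds 0) := by
    rw [show (0:ℝ) = -0 by ring]
    apply Filter.Tendsto.neg
    apply Filter.Tendsto.inv_tendsto_atTop
    apply Filter.Tendsto.comp ((Filter.tendsto_pow_atTop (by norm_num : (2:ℕ) ≠ 0)))
    exact Filter.tendsto_atTop_add_const_left _ 1 Filter.tendsto_id
  have hint : IntegrableOn (fun s : ℝ => 2 * ((1+s)^3)⁻¹) (Set.Ioi 0) :=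
    integrableOn_Ioi_deriv_of_nonneg' hderiv hnn htend
  have hval : ∫ s in Set.Ioi (0:ℝ), 2 * ((1+s)^3)⁻¹ = 1 := by
    rw [integral_Ioi_of_hasDerivAt_of_tendsto' hderiv hint htend]
    norm_num
  rw [← ofReal_integral_eq_lintegral_ofReal hint
    ((ae_restrict_iff' measurableSet_Ioi).2 (Filter.Eventually.of_forall hnn)), hval]
  simp

noncomputable def Ψ₂ (x L : ℝ) : ℝ := Real.exp ((2 / L ^ 2) * h₂ (L * x)) - 1

theorem bennett_orlicz_norm_from_tail {Ω : Type*} [MeasurableSpace Ω]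
    (μ : Measure Ω) [IsProbabilityMeasure μ] (Z : Ω → ℝ) (hZ : Measurable Z)
    (τ L : ℝ) (hτ : 0 < τ) (hL : 0 < L)
    (h₂inv : ℝ → ℝ) (hinv : ∀ y : ℝ, 0 ≤ y → 0 ≤ h₂inv y ∧ h₂ (h₂inv y) = y)
    (hyp : ∀ t : ℝ, 0 < t →
      μ {ω | |Z ω| > (τ / L) * h₂inv (L ^ 2 * t / 2)} ≤ ENNReal.ofReal (2 * Real.exp (-t))) :
    sInf {c : ℝ | 0 < c ∧ ∫ ω, Ψ₂ (|Z ω| / c) (Real.sqrt 3 * L) ∂μ ≤ 1}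
      ≤ Real.sqrt 3 * τ := by
  have hs3 : (0:ℝ) < Real.sqrt 3 := Real.sqrt_pos.2 (by norm_num)
  set c := Real.sqrt 3 * τ with hcdef
  have hc : 0 < c := mul_pos hs3 hτ
  set g : Ω → ℝ := fun ω => Ψ₂ (|Z ω| / c) (Real.sqrt 3 * L) with hgdef
  have hsq : (Real.sqrt 3 * L) ^ 2 = 3 * L ^ 2 := by
    rw [mul_pow, Real.sq_sqrt (by norm_num : (3:ℝ) ≥ 0)]
  have hg_eq : ∀ ω, g ω = Real.exp ((2 / (3 * L ^ 2)) * h₂ (L * |Z ω| / τ)) - 1 := by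
    intro ω
    have harg : Real.sqrt 3 * L * (|Z ω| / c) = L * |Z ω| / τ := by
      rw [hcdef]; field_simp
    simp only [hgdef, Ψ₂, hsq, harg]
  have hg_nonneg : ∀ ω, 0 ≤ g ω := by
    intro ω
    rw [hg_eq ω, sub_nonneg]
    rw [show (1:ℝ) = Real.exp 0 by simp]
    apply Real.exp_le_exp.2
    have := h2_nonneg (x := L * |Z ω| / τ) (by positivity)
    positivity
  have hg_meas : Measurable g := by
    apply Measurable.sub _ measurable_const
    exact Real.measurable_exp.comp (measurable_const.mul
      (h2_measurable.comp (measurable_const.mul ((hZ.abs.div_const c)))))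
  -- lintegral bound
  have key : ∫⁻ ω, ENNReal.ofReal (g ω) ∂μ ≤ 1 := by
    rw [lintegral_eq_lintegral_meas_lt μ (Filter.Eventually.of_forall hg_nonneg)
      hg_meas.aemeasurable]
    calc ∫⁻ s in Set.Ioi (0:ℝ), μ {ω | s < g ω}
        ≤ ∫⁻ s in Set.Ioi (0:ℝ), ENNReal.ofReal (2 * ((1+s)^3)⁻¹) := by
          apply setLIntegral_mono
          · exact ENNReal.measurable_ofReal.comp
              (measurable_const.mul (((measurable_const.add measurable_id).pow_const 3).inv))
          intro s hs
          have hs0 : (0:ℝ) < s := hs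
          have h1s : (0:ℝ) < 1 + s := by linarith
          set t := 3 * Real.log (1 + s) with htdef
          have ht : 0 < t := by
            have := Real.log_pos (by linarith : (1:ℝ) < 1 + s)
            positivity
          have hy : (0:ℝ) ≤ L ^ 2 * t / 2 := by positivity
          obtain ⟨hb0, hbeq⟩ := hinv _ hy
          have hset : {ω | s < g ω} = {ω | |Z ω| > (τ / L) * h₂inv (L ^ 2 * t / 2)} := by
            ext ω
            simp only [Set.mem_setOf_eq, hg_eq ω, gt_iff_lt]
            rw [lt_sub_iff_add_lt']
            rw [show (1:ℝ) + s = Real.exp (Real.log (1 + s)) by rw [Real.exp_log h1s]]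
            rw [Real.exp_lt_exp]
            constructor
            · intro h
              have hlt : L ^ 2 * t / 2 < h₂ (L * |Z ω| / τ) := by
                rw [htdef]
                have hL2 : (0:ℝ) < 3 * L ^ 2 := by positivity
                rw [div_mul_eq_mul_div, lt_div_iff₀ hL2] at h
                nlinarith
              rw [← hbeq] at hlt
              have harg : 0 ≤ L * |Z ω| / τ := by positivity
              have : h₂inv (L ^ 2 * t / 2) < L * |Z ω| / τ := by
                by_contra hcon
                push_neg at hcon
                rcases hcon.eq_or_lt with h' | h'
                · rw [h'] at hlt; exact lt_irrefl _ hlt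
                · exact absurd (h2_strictMonoOn harg hb0 h') (not_lt.2 hlt.le)
              calc τ / L * h₂inv (L ^ 2 * t / 2) < τ / L * (L * |Z ω| / τ) := by
                    apply mul_lt_mul_of_pos_left this (by positivity)
                _ = |Z ω| := by field_simp
            · intro h
              have harg : h₂inv (L ^ 2 * t / 2) < L * |Z ω| / τ := by
                rw [lt_div_iff₀ hτ]
                calc h₂inv (L ^ 2 * t / 2) * τ = (τ / L * h₂inv (L ^ 2 * t / 2)) * L := by
                      field_simp
                  _ < |Z ω| * L := by
                      exact mul_lt_mul_of_pos_right h hL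
                  _ = L * |Z ω| := by ring
              have hlt : L ^ 2 * t / 2 < h₂ (L * |Z ω| / τ) := by
                rw [← hbeq]
                exact h2_strictMonoOn hb0 (le_trans hb0 harg.le) harg
              rw [htdef] at hlt
              have hL2 : (0:ℝ) < 3 * L ^ 2 := by positivity
              rw [div_mul_eq_mul_div, lt_div_iff₀ hL2]
              nlinarith
          rw [hset]
          refine le_trans (hyp t ht) ?_
          apply ENNReal.ofReal_le_ofReal
          have : Real.exp (-t) = ((1+s)^3)⁻¹ := by
            rw [htdef, Real.exp_neg, show (3:ℝ) * Real.log (1+s) = (3:ℕ) * Real.log (1+s) by norm_num,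
              Real.exp_nat_mul, Real.exp_log h1s]
          rw [this]
      _ = 1 := tail_integral
  -- integrability
  have hgint : Integrable g μ := by
    refine ⟨hg_meas.aestronglyMeasurable, ?_⟩
    rw [hasFiniteIntegral_iff_norm]
    apply lt_of_le_of_lt _ ENNReal.one_lt_top
    refine le_trans (le_of_eq ?_) key
    congr 1
    ext ω
    rw [Real.norm_of_nonneg (hg_nonneg ω)]
  have hle : ∫ ω, g ω ∂μ ≤ 1 := by
    rw [integral_eq_lintegral_of_nonneg_ae (Filter.Eventually.of_forall hg_nonneg)
      hg_meas.aestronglyMeasurable]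
    exact ENNReal.toReal_le_of_le_ofReal zero_le_one (by simpa using key)
  exact csInf_le ⟨0, fun x hx => hx.1.le⟩ ⟨hc, hle⟩
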